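/- Fix an integer n ≥ 3 and let Aₙ = 2π^{n/2}/Γ(n/2) denote the surface area of the unit sphere in ℝⁿ. Let G, R > 0, let ρ : [0,R] → ℝ be continuous and nonnegative, set M(r) = ∫₀^r Aₙ·s^{n−1}·ρ(s) ds and Mtot = M(R), and assume Mtot > 0. Suppose p : [0,R] → ℝ is continuous, differentiable on (0,R), satisfies p'(r) = −G·M(r)·ρ(r)/r^{n−1} for all r ∈ (0,R), and p(R) = 0. Then the central pressure satisfies p(0) ≥ G·Mtot²/(2·Aₙ·R^{2(n−1)}) = G·Mtot²·Γ(n/2)/(4·π^{n/2}·R^{2(n−1)}). -/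

import Mathlib

open Set intervalIntegral

/-- Central pressure lower bound for an `n`-dimensional star (`n ≥ 3`) in hydrostatic
equilibrium: `p 0 ≥ G·Mtot²/(2·Aₙ·R^{2(n−1)}) = G·Mtot²·Γ(n/2)/(4·π^{n/2}·R^{2(n−1)})`,
where `Aₙ = 2π^{n/2}/Γ(n/2)`. -/
theorem stmt2 (n : ℕ) (hn : 3 ≤ n) (G R : ℝ) (hG : 0 < G) (hR : 0 < R)
    (A : ℝ) (hA : A = 2 * Real.pi ^ ((n : ℝ) / 2) / Real.Gamma ((n : ℝ) / 2))
    (ρ : ℝ → ℝ) (hρ_cont : ContinuousOn ρ (Icc 0 R))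
    (hρ_nonneg : ∀ r ∈ Icc (0 : ℝ) R, 0 ≤ ρ r)
    (M : ℝ → ℝ)
    (hM : ∀ r, M r = ∫ s in (0 : ℝ)..r, A * s ^ (n - 1) * ρ s)
    (hMtot : 0 < M R)
    (p : ℝ → ℝ) (hp_cont : ContinuousOn p (Icc 0 R))
    (hp_deriv : ∀ r ∈ Ioo (0 : ℝ) R, HasDerivAt p (-(G * M r * ρ r) / r ^ (n - 1)) r)
    (hpR : p R = 0) :
    p 0 ≥ G * (M R) ^ 2 / (2 * A * R ^ (2 * (n - 1))) ∧
      G * (M R) ^ 2 / (2 * A * R ^ (2 * (n - 1)))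
        = G * (M R) ^ 2 * Real.Gamma ((n : ℝ) / 2)
            / (4 * Real.pi ^ ((n : ℝ) / 2) * R ^ (2 * (n - 1))) := by
  have hπ : (0:ℝ) < Real.pi ^ ((n : ℝ) / 2) := Real.rpow_pos_of_pos Real.pi_pos _
  have hΓ : 0 < Real.Gamma ((n : ℝ) / 2) := by
    apply Real.Gamma_pos_of_pos
    have : (0:ℝ) < (n:ℝ) := by positivity
    linarith
  have hA0 : 0 < A := by rw [hA]; positivity
  set f : ℝ → ℝ := fun s => A * s ^ (n - 1) * ρ s with hf
  have hf_cont : ContinuousOn f (Icc 0 R) := by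
    exact (continuousOn_const.mul (continuousOn_pow _)).mul hρ_cont
  have hf_int : ∀ r ∈ Icc (0:ℝ) R, IntervalIntegrable f MeasureTheory.volume 0 r := by
    intro r hr
    apply ContinuousOn.intervalIntegrable
    apply hf_cont.mono
    rw [uIcc_of_le hr.1]
    exact Icc_subset_Icc le_rfl hr.2
  -- continuity of M
  have hMcont : ContinuousOn M (Icc 0 R) := by
    have : ContinuousOn (fun r => ∫ s in (0:ℝ)..r, f s) (Icc 0 R) := by
      have := intervalIntegral.continuousOn_primitive_interval
        (f := f) (a := (0:ℝ)) (b := R) (μ := MeasureTheory.volume) ?_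
      · rwa [uIcc_of_le hR.le] at this
      · rw [uIcc_of_le hR.le]
        exact (hf_cont.integrableOn_compact isCompact_Icc)
    exact this.congr (fun r _ => hM r)
  -- derivative of M at interior points
  have hMderiv : ∀ r ∈ Ioo (0:ℝ) R, HasDerivAt M (f r) r := by
    intro r hr
    have hcontOn : ContinuousOn f (Ioo 0 R) := hf_cont.mono Ioo_subset_Icc_self
    have hca : ContinuousAt f r := hcontOn.continuousAt (isOpen_Ioo.mem_nhds hr)
    have hmeas : StronglyMeasurableAtFilter f (nhds r) MeasureTheory.volume :=
      hcontOn.stronglyMeasurableAtFilter isOpen_Ioo r hr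
    have := intervalIntegral.integral_hasDerivAt_right
      (hf_int r ⟨hr.1.le, hr.2.le⟩) hmeas hca
    exact HasDerivAt.congr_of_eventuallyEq this (Filter.Eventually.of_forall hM)
  -- nonnegativity of M
  have hMnn : ∀ r ∈ Icc (0:ℝ) R, 0 ≤ M r := by
    intro r hr
    rw [hM r]
    apply intervalIntegral.integral_nonneg hr.1
    intro s hs
    have hsR : s ∈ Icc (0:ℝ) R := ⟨hs.1, hs.2.trans hr.2⟩
    have := hρ_nonneg s hsR
    exact mul_nonneg (mul_nonneg hA0.le (pow_nonneg hs.1 _)) this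
  have hM0 : M 0 = 0 := by rw [hM 0, intervalIntegral.integral_same]
  -- the auxiliary function
  set c : ℝ := G / (2 * A * R ^ (2 * (n - 1))) with hc
  have hc0 : 0 < c := by positivity
  set F : ℝ → ℝ := fun r => p r + c * (M r) ^ 2 with hF
  have hFcont : ContinuousOn F (Icc 0 R) :=
    hp_cont.add (continuousOn_const.mul (hMcont.pow 2))
  have hFderiv : ∀ r ∈ Ioo (0:ℝ) R,
      HasDerivAt F (-(G * M r * ρ r) / r ^ (n - 1) + c * (2 * M r * f r)) r := by
    intro r hr
    have h1 := hp_deriv r hr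
    have h2 : HasDerivAt (fun r => c * (M r) ^ 2) (c * (2 * M r * f r)) r := by
      have := ((hMderiv r hr).pow 2).const_mul c
      refine this.congr_deriv ?_
      ring
    exact h1.add h2
  have hFanti : AntitoneOn F (Icc 0 R) := by
    apply antitoneOn_of_deriv_nonpos (convex_Icc 0 R) hFcont
    · intro r hr
      rw [interior_Icc] at hr
      exact (hFderiv r hr).differentiableAt.differentiableWithinAt
    · intro r hr
      rw [interior_Icc] at hr
      rw [(hFderiv r hr).deriv]
      have hr0 : 0 < r := hr.1
      have hrn : (0:ℝ) < r ^ (n - 1) := by positivity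
      have hMr : 0 ≤ M r := hMnn r ⟨hr.1.le, hr.2.le⟩
      have hρr : 0 ≤ ρ r := hρ_nonneg r ⟨hr.1.le, hr.2.le⟩
      -- rewrite as G * M r * ρ r * (r^(n-1)/R^(2(n-1)) - 1/r^(n-1)) ≤ 0
      have key : r ^ (n-1) * r ^ (n-1) ≤ R ^ (2 * (n-1)) := by
        have h1 : r ^ (n-1) ≤ R ^ (n-1) := pow_le_pow_left₀ hr0.le hr.2.le _
        calc r ^ (n-1) * r ^ (n-1) ≤ R ^ (n-1) * R ^ (n-1) := by
              apply mul_le_mul h1 h1 (by positivity) (by positivity)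
          _ = R ^ (2 * (n-1)) := by rw [two_mul, pow_add]
      have hRK : (0:ℝ) < R ^ (2 * (n-1)) := by positivity
      have expand : -(G * M r * ρ r) / r ^ (n - 1) + c * (2 * M r * f r)
          = G * M r * ρ r * (r ^ (n-1) / R ^ (2*(n-1)) - 1 / r ^ (n-1)) := by
        rw [hc, hf]
        field_simp
        ring
      rw [expand]
      apply mul_nonpos_of_nonneg_of_nonpos
      · positivity
      · rw [sub_nonpos, div_le_div_iff₀ hRK hrn]
        calc r ^ (n-1) * r ^ (n-1) ≤ R ^ (2*(n-1)) := key
          _ = 1 * R ^ (2*(n-1)) := (one_mul _).symm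
  have hF0R : F R ≤ F 0 := hFanti (left_mem_Icc.2 hR.le) (right_mem_Icc.2 hR.le) hR.le
  have hFr : F R = c * (M R) ^ 2 := by simp [hF, hpR]
  have hF0 : F 0 = p 0 := by simp [hF, hM0]
  constructor
  · rw [hFr, hF0] at hF0R
    rw [ge_iff_le]
    have heq : G * (M R)^2 / (2 * A * R ^ (2*(n-1))) = c * (M R)^2 := by
      rw [hc]; ring
    rw [heq]
    exact hF0R
  · rw [hA]
    have hRK : (0:ℝ) < R ^ (2 * (n-1)) := by positivity
    field_simp
    ring
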